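/- arXiv:1805.07972 — 2 statements merged into one kernel-verified Lean document; each statement's English description precedes it below -/
import Mathlib

section
/- In the asymptotic uplink setup, let D_{li} be the diagonal matrix carrying the diagonal entries of R_{li}, let Λ be the diagonal matrix whose diagonal entries are the reciprocals of the diagonal entries of Σ_{(l,i)∈P} p_{li}τ_p R_{li} + σ² I_M, and set Σ_{jk} = p_{jk}τ_p D_{jk} Λ Ψ^{-1} Λ D_{jk}. Define χ_{li} = tr(R_{li}Σ_{jk}) + h̄_{jk}^H R_{li} h̄_{jk} + h̄_{li}^H Σ_{jk} h̄_{li} + |h̄_{jk}^H h̄_{li}|² + [p_{jk}p_{li}τ_p² (tr(D_{li}ΛD_{jk}))² + 2√(p_{jk}p_{li})τ_p tr(D_{li}ΛD_{jk}) Re{h̄_{jk}^H h̄_{li}} if (l,i) ∈ P, and 0 otherwise], and γ^ew(M) = p_{jk}(p_{jk}τ_p tr(D_{jk}ΛD_{jk}) + ‖h̄_{jk}‖²)² / [Σ_{all users (l,i)} p_{li} χ_{li} − p_{jk}(p_{jk}τ_p tr(D_{jk}ΛD_{jk}) + ‖h̄_{jk}‖²)² + σ²(tr(Σ_{jk}) +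 ‖h̄_{jk}‖²)]. Then: (a) if (1/M) tr(D_{li}(M) D_{jk}(M)) → 0 as M → ∞ for every (l,i) ∈ P\{(j,k)}, then γ^ew(M) → +∞; (b) if instead there exist c > 0 and M₀ such that Σ_{(l,i)∈P\{(j,k)}} (1/M) tr(D_{li}(M) D_{jk}(M)) ≥ c for all M ≥ M₀, then γ^ew(M) − [p_{jk}² τ_p tr(D_{jk}ΛD_{jk}) + p_{jk}‖h̄_{jk}‖²] / [Σ_{(l,i)∈P\{(j,k)}} p_{li}² p_{jk} τ_p² (tr(D_{li}ΛD_{jk}))² / (p_{jk}τ_p tr(D_{jk}ΛD_{jk}) + ‖h̄_{jk}‖²)] → 0 as M → ∞. -/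
open Matrix Filter Topology
open scoped ComplexOrder


namespace Stmt13Aux

variable {n : ℕ}

lemma nonneg_eq_re {z : ℂ} (h : 0 ≤ z) : z = (z.re : ℂ) := by
  have h2 := (Complex.le_def.mp h).2
  apply Complex.ext <;> simp [← h2]

lemma psd_smul {A : Matrix (Fin n) (Fin n) ℂ} (hA : A.PosSemidef) {c : ℝ} (hc : 0 ≤ c) :
    (((c : ℝ) : ℂ) • A).PosSemidef := by
  refine Matrix.PosSemidef.of_dotProduct_mulVec_nonneg ?_ ?_
  · simp [Matrix.IsHermitian, conjTranspose_smul, hA.1.eq, Complex.star_def,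
      Complex.conj_ofReal]
  · intro x
    rw [smul_mulVec, dotProduct_smul, smul_eq_mul]
    exact mul_nonneg (Complex.zero_le_real.mpr hc) (hA.dotProduct_mulVec_nonneg x)

lemma psd_sum {ι : Type*} (s : Finset ι) (f : ι → Matrix (Fin n) (Fin n) ℂ)
    (h : ∀ u ∈ s, (f u).PosSemidef) : (∑ u ∈ s, f u).PosSemidef :=
  Finset.sum_induction f _ (fun _ _ ha hb => ha.add hb) Matrix.PosSemidef.zero h

lemma psd_diag_nonneg {A : Matrix (Fin n) (Fin n) ℂ} (hA : A.PosSemidef) (m : Fin n) :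
    0 ≤ A m m := by
  exact hA.diag_nonneg

lemma psd_trace_nonneg {A : Matrix (Fin n) (Fin n) ℂ} (hA : A.PosSemidef) :
    0 ≤ A.trace :=
  Finset.sum_nonneg fun m _ => psd_diag_nonneg hA m

lemma psd_trace_mul_nonneg {A B : Matrix (Fin n) (Fin n) ℂ}
    (hA : A.PosSemidef) (hB : B.PosSemidef) : 0 ≤ (A * B).trace := by
  obtain ⟨s, hherm, hss⟩ : ∃ s : Matrix (Fin n) (Fin n) ℂ, sᴴ = s ∧ s * s = A :=
    by
      open scoped MatrixOrder in
      exact ⟨CFC.sqrt A, (Matrix.nonneg_iff_posSemidef.mp (CFC.sqrt_nonneg A)).1,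
        CFC.sqrt_mul_sqrt_self A hA.nonneg⟩
  have h3 : (s * B * s).PosSemidef := by
    have := hB.conjTranspose_mul_mul_same s
    rwa [hherm] at this
  rw [← hss, Matrix.mul_assoc, Matrix.trace_mul_comm]
  exact psd_trace_nonneg h3


lemma re_trace_mul_nonneg {A B : Matrix (Fin n) (Fin n) ℂ}
    (hA : A.PosSemidef) (hB : B.PosSemidef) : 0 ≤ ((A * B).trace).re :=
  (Complex.le_def.mp (psd_trace_mul_nonneg hA hB)).1

/-- if `A ≤ c•1` (Loewner) then `tr(A*S).re ≤ c * tr(S).re` for psd `S`. -/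
lemma re_trace_mul_le {A S : Matrix (Fin n) (Fin n) ℂ} {c : ℝ}
    (h : (((c : ℝ) : ℂ) • (1 : Matrix (Fin n) (Fin n) ℂ) - A).PosSemidef)
    (hS : S.PosSemidef) : ((A * S).trace).re ≤ c * ((S.trace).re) := by
  have h0 := (Complex.le_def.mp (psd_trace_mul_nonneg h hS)).1
  have hexp : ((((c : ℝ) : ℂ) • (1 : Matrix (Fin n) (Fin n) ℂ) - A) * S).trace
      = ((c : ℝ) : ℂ) * S.trace - (A * S).trace := by
    rw [Matrix.sub_mul, Matrix.trace_sub, Matrix.smul_mul, Matrix.one_mul,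
      Matrix.trace_smul, smul_eq_mul]
  rw [hexp] at h0
  simp only [Complex.sub_re, Complex.re_ofReal_mul, Complex.zero_re] at h0
  linarith

lemma re_quad_nonneg {A : Matrix (Fin n) (Fin n) ℂ} (hA : A.PosSemidef) (x : Fin n → ℂ) :
    0 ≤ (star x ⬝ᵥ A *ᵥ x).re :=
  (Complex.le_def.mp (hA.dotProduct_mulVec_nonneg x)).1

lemma re_quad_le {A : Matrix (Fin n) (Fin n) ℂ} {c : ℝ}
    (h : (((c : ℝ) : ℂ) • (1 : Matrix (Fin n) (Fin n) ℂ) - A).PosSemidef)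
    (x : Fin n → ℂ) :
    (star x ⬝ᵥ A *ᵥ x).re ≤ c * (star x ⬝ᵥ x).re := by
  have h0 := (Complex.le_def.mp (h.dotProduct_mulVec_nonneg x)).1
  have hexp : star x ⬝ᵥ ((((c : ℝ) : ℂ) • (1 : Matrix (Fin n) (Fin n) ℂ) - A) *ᵥ x)
      = ((c : ℝ) : ℂ) * (star x ⬝ᵥ x) - star x ⬝ᵥ A *ᵥ x := by
    rw [Matrix.sub_mulVec, dotProduct_sub, Matrix.smul_mulVec,
      Matrix.one_mulVec, dotProduct_smul, smul_eq_mul]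
  rw [hexp] at h0
  simp only [Complex.sub_re, Complex.re_ofReal_mul, Complex.zero_re] at h0
  linarith

lemma trace_diagonal_mul_mul_diagonal (d e : Fin n → ℂ) (A : Matrix (Fin n) (Fin n) ℂ) :
    (Matrix.diagonal d * A * Matrix.diagonal e).trace = ∑ m, d m * A m m * e m := by
  simp [Matrix.trace, Matrix.diag, Matrix.mul_diagonal, Matrix.diagonal_mul]

lemma star_dot_self (v : Fin n → ℂ) :
    star v ⬝ᵥ v = ((∑ m, Complex.normSq (v m) : ℝ) : ℂ) := by
  push_cast
  simp [dotProduct, Complex.star_def, Complex.normSq_eq_conj_mul_self]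


lemma tendsto_partA {t Den : ℕ → ℝ} {p0 δ : ℝ} (hp0 : 0 < p0) (hδ : 0 < δ)
    (ht : ∀ᶠ M in atTop, δ * M ≤ t M)
    (hpos : ∀ᶠ M in atTop, 0 < Den M)
    (hD : Tendsto (fun M : ℕ => Den M / (M : ℝ) ^ 2) atTop (nhds 0)) :
    Tendsto (fun M => p0 * t M ^ 2 / Den M) atTop atTop := by
  rw [tendsto_atTop]
  intro b
  set b' := max b 1 with hb'def
  have hb'pos : (0:ℝ) < b' := lt_of_lt_of_le one_pos (le_max_right _ _)
  have hε : 0 < p0 * δ ^ 2 / b' := by positivity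
  have h1 : ∀ᶠ M in atTop, Den M / (M:ℝ) ^ 2 < p0 * δ ^ 2 / b' :=
    hD.eventually (gt_mem_nhds hε)
  filter_upwards [ht, hpos, h1, eventually_ge_atTop 1] with M hM1 hM2 hM3 hM4
  have hMpos : (0:ℝ) < M := by exact_mod_cast hM4
  have hDen : Den M ≤ p0 * δ ^ 2 / b' * (M:ℝ) ^ 2 :=
    le_of_lt ((div_lt_iff₀ (by positivity)).mp hM3)
  calc b ≤ b' := le_max_left _ _
    _ ≤ p0 * t M ^ 2 / Den M := by
        rw [le_div_iff₀ hM2]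
        have h6 : b' * Den M ≤ p0 * δ ^ 2 * (M:ℝ) ^ 2 := by
          calc b' * Den M ≤ b' * (p0 * δ ^ 2 / b' * (M:ℝ) ^ 2) :=
                mul_le_mul_of_nonneg_left hDen hb'pos.le
            _ = p0 * δ ^ 2 * (M:ℝ) ^ 2 := by field_simp
        have h8 : (δ * M) ^ 2 ≤ t M ^ 2 := by
          apply sq_le_sq' _ hM1
          nlinarith
        nlinarith


/-- small helper: `f M / M^2 → 0` when `0 ≤ f M ≤ K M` eventually. -/
lemma tendsto_linear_div_sq {f : ℕ → ℝ} {Kf : ℝ}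
    (h : ∀ᶠ M : ℕ in atTop, 0 ≤ f M ∧ f M ≤ Kf * M) :
    Tendsto (fun M : ℕ => f M / (M : ℝ) ^ 2) atTop (nhds 0) := by
  apply squeeze_zero_norm' (a := fun M : ℕ => Kf / (M : ℝ))
  · filter_upwards [h, eventually_ge_atTop 1] with M hM hM1
    have hMpos : (0:ℝ) < M := by exact_mod_cast hM1
    rw [Real.norm_eq_abs, abs_div, abs_of_nonneg hM.1, abs_of_nonneg (by positivity)]
    rw [div_le_div_iff₀ (by positivity) hMpos]
    calc f M * M ≤ (Kf * M) * M := by nlinarith [hM.1, hM.2]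
      _ = Kf * M ^2 := by ring
  · exact tendsto_const_div_atTop_nhds_zero_nat Kf

/-- helper: `b M * g M / M^2 → 0` when `0 ≤ b ≤ Kb M` and `g/M → 0`. -/
lemma tendsto_bg_div_sq {b g : ℕ → ℝ} {Kb : ℝ}
    (hb : ∀ M : ℕ, 0 ≤ b M ∧ b M ≤ Kb * M)
    (hg : Tendsto (fun M : ℕ => g M / (M : ℝ)) atTop (nhds 0)) :
    Tendsto (fun M : ℕ => b M * g M / (M : ℝ) ^ 2) atTop (nhds 0) := by
  have hKb0 : 0 ≤ Kb := by
    have h1 := (hb 1).1; have h2 := (hb 1).2; simp at h2; linarith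
  apply squeeze_zero_norm' (a := fun M : ℕ => Kb * |g M / (M:ℝ)|)
  · filter_upwards [eventually_ge_atTop 1] with M hM1
    have hMpos : (0:ℝ) < M := by exact_mod_cast hM1
    rw [Real.norm_eq_abs, abs_div, abs_mul, abs_of_nonneg (hb M).1,
      abs_of_nonneg (sq_nonneg (M:ℝ))]
    rw [abs_div, abs_of_nonneg hMpos.le]
    rw [div_le_iff₀ (by positivity)]
    have : Kb * (|g M| / M) * M ^ 2 = (Kb * M) * |g M| * M / M := by ring
    rw [this, mul_div_cancel_right₀ _ (ne_of_gt hMpos)]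
    have := (hb M).2
    nlinarith [abs_nonneg (g M), (hb M).1]
  · have := hg.abs.const_mul Kb
    simpa using this

set_option maxHeartbeats 2000000 in
lemma core {ι : Type*} [Fintype ι] [DecidableEq ι]
    (jk : ι) (P : Finset ι) (hjkP : jk ∈ P) (p : ι → ℝ) (hp : ∀ u, 0 < p u)
    (τ σ2 : ℝ) (hτ : 0 < τ) (hσ2 : 0 < σ2)
    (a n s : ℕ → ℝ) (T q g b : ι → ℕ → ℝ)
    (hs : ∀ M, s M = p jk * τ * a M)
    (hbjk : ∀ M, b jk M = a M)
    (hqg : ∀ u M, (g u M) ^ 2 ≤ q u M)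
    (hT0 : ∀ u M, 0 ≤ T u M)
    (hKT : ∀ u, ∃ KT : ℝ, ∀ᶠ M : ℕ in atTop, T u M ≤ KT * M)
    (hqjk : ∀ M, q jk M = n M ^ 2)
    (hgjk : ∀ M, g jk M = n M)
    (hn0 : ∀ M, 0 ≤ n M)
    (hKn : ∃ Kn : ℝ, ∀ᶠ M : ℕ in atTop, n M ≤ Kn * M)
    (hqlim : ∀ u, u ≠ jk → Tendsto (fun M : ℕ => q u M / (M:ℝ)^2) atTop (nhds 0))
    (hglim : ∀ u, u ≠ jk → Tendsto (fun M : ℕ => g u M / (M:ℝ)) atTop (nhds 0))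
    (hb0 : ∀ u M, 0 ≤ b u M)
    (hKb : ∀ u, ∃ Kb : ℝ, ∀ M : ℕ, b u M ≤ Kb * M)
    (hδa : ∃ δ > 0, ∀ᶠ M : ℕ in atTop, δ * M ≤ a M)
    (hKa : ∃ Ka : ℝ, ∀ M : ℕ, a M ≤ Ka * M) :
    let χc : ι → ℕ → ℝ := fun u M => T u M + q u M +
      (if u ∈ P then p jk * p u * τ^2 * (b u M)^2
          + 2*Real.sqrt (p jk * p u) * τ * (b u M) * (g u M) else 0)
    let t : ℕ → ℝ := fun M => p jk * τ * a M + n M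
    let Den : ℕ → ℝ := fun M => (∑ u, p u * χc u M) - p jk * t M ^ 2 + σ2 * (s M + n M)
    ((∀ u ∈ P.erase jk, Tendsto (fun M : ℕ => b u M / (M:ℝ)) atTop (nhds 0)) →
      Tendsto (fun M => p jk * t M ^ 2 / Den M) atTop atTop)
    ∧ ((∃ c > 0, ∃ M₀ : ℕ, ∀ M ≥ M₀, c ≤ ∑ u ∈ P.erase jk, b u M / (M:ℝ)) →
      Tendsto (fun M : ℕ => p jk * t M ^ 2 / Den M -
          (p jk ^ 2 * τ * a M + p jk * n M) /
            (∑ u ∈ P.erase jk, p u ^ 2 * p jk * τ ^ 2 * (b u M)^2 / t M))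
        atTop (nhds 0)) := by
  intro χc t Den
  obtain ⟨δ, hδpos, hδev⟩ := hδa
  obtain ⟨Ka, hKa⟩ := hKa
  obtain ⟨Kn, hKn⟩ := hKn
  choose KT hKT using hKT
  choose Kb hKb using hKb
  have hpjk := hp jk
  have hq0 : ∀ u M, 0 ≤ q u M := fun u M => (sq_nonneg _).trans (hqg u M)
  have hχ0 : ∀ u M, 0 ≤ χc u M := by
    intro u M
    simp only [χc]
    by_cases hu : u ∈ P
    · rw [if_pos hu]
      have hsq : Real.sqrt (p jk * p u) ^ 2 = p jk * p u :=
        Real.sq_sqrt (mul_nonneg hpjk.le (hp u).le)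
      generalize hgen : Real.sqrt (p jk * p u) = sq at hsq ⊢
      have key : p jk * p u * τ ^ 2 * b u M ^ 2 = sq ^ 2 * τ ^ 2 * b u M ^ 2 := by
        rw [hsq]
      nlinarith [hqg u M, hT0 u M, sq_nonneg (sq * τ * b u M + g u M), key]
    · rw [if_neg hu]
      nlinarith [hqg u M, hT0 u M, sq_nonneg (g u M)]
  -- bounds on t
  have ht_lb : ∀ᶠ M : ℕ in atTop, (p jk * τ * δ) * M ≤ t M := by
    filter_upwards [hδev] with M hM
    simp only [t]
    have h1 := hn0 M
    have h2 : p jk * τ * (δ * M) ≤ p jk * τ * a M :=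
      mul_le_mul_of_nonneg_left hM (by positivity)
    nlinarith
  set Kt := p jk * τ * Ka + Kn with hKtdef
  have ht_ub : ∀ᶠ M : ℕ in atTop, t M ≤ Kt * M := by
    filter_upwards [hKn] with M h1
    simp only [t]
    have h2 : p jk * τ * a M ≤ p jk * τ * (Ka * M) :=
      mul_le_mul_of_nonneg_left (hKa M) (by positivity)
    rw [hKtdef]; nlinarith
  have hδt : 0 < p jk * τ * δ := by positivity
  -- Den decomposition (positivity form)
  have hDen0 : ∀ M, Den M =
      (∑ u ∈ Finset.univ.erase jk, p u * χc u M) + p jk * T jk M + σ2 * t M := by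
    intro M
    simp only [Den, t]
    rw [hs M]
    rw [show (∑ u, p u * χc u M)
        = p jk * χc jk M + ∑ u ∈ Finset.univ.erase jk, p u * χc u M from
      (Finset.add_sum_erase _ _ (Finset.mem_univ jk)).symm]
    have hχjk : χc jk M = T jk M + (p jk * τ * a M + n M) ^ 2 := by
      simp only [χc, if_pos hjkP]
      rw [hqjk M, hgjk M, hbjk M, Real.sqrt_mul_self hpjk.le]
      ring
    rw [hχjk]; ring
  have hDenpos : ∀ᶠ M : ℕ in atTop, 0 < Den M := by
    filter_upwards [ht_lb, eventually_ge_atTop 1] with M h1 hM1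
    rw [hDen0 M]
    have hMpos : (0:ℝ) < M := by exact_mod_cast hM1
    have h2 : 0 < t M := lt_of_lt_of_le (by positivity) h1
    have h3 : 0 ≤ ∑ u ∈ Finset.univ.erase jk, p u * χc u M :=
      Finset.sum_nonneg fun u _ => mul_nonneg (hp u).le (hχ0 u M)
    have h4 : 0 ≤ p jk * T jk M := mul_nonneg hpjk.le (hT0 jk M)
    nlinarith [mul_pos hσ2 h2]
  -- second decomposition
  set S0 : ℕ → ℝ := fun M => ∑ u ∈ P.erase jk, p u ^ 2 * p jk * τ ^ 2 * (b u M) ^ 2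
    with hS0def
  have hS0M : ∀ M : ℕ, S0 M = ∑ u ∈ P.erase jk, p u ^ 2 * p jk * τ ^ 2 * (b u M) ^ 2 :=
    fun _ => rfl
  have hDen1 : ∀ M, Den M =
      (∑ u ∈ Finset.univ.erase jk, p u * (T u M + q u M)) + S0 M
      + (∑ u ∈ P.erase jk, 2 * p u * Real.sqrt (p jk * p u) * τ * b u M * g u M)
      + p jk * T jk M + σ2 * t M := by
    intro M
    rw [hDen0 M]
    have h1 : ∀ u ∈ Finset.univ.erase jk, p u * χc u M
        = p u * (T u M + q u M) + (if u ∈ P then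
            p u ^ 2 * p jk * τ ^ 2 * (b u M) ^ 2
              + 2 * p u * Real.sqrt (p jk * p u) * τ * b u M * g u M else 0) := by
      intro u _
      simp only [χc]
      by_cases hu : u ∈ P
      · rw [if_pos hu, if_pos hu]; ring
      · rw [if_neg hu, if_neg hu]; ring
    rw [Finset.sum_congr rfl h1, Finset.sum_add_distrib]
    have h2 : (∑ u ∈ Finset.univ.erase jk, (if u ∈ P then
            p u ^ 2 * p jk * τ ^ 2 * (b u M) ^ 2
              + 2 * p u * Real.sqrt (p jk * p u) * τ * b u M * g u M else 0))
        = ∑ u ∈ P.erase jk, (p u ^ 2 * p jk * τ ^ 2 * (b u M) ^ 2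
              + 2 * p u * Real.sqrt (p jk * p u) * τ * b u M * g u M) := by
      rw [Finset.sum_ite_mem]
      congr 1
      ext v
      simp only [Finset.mem_inter, Finset.mem_erase, Finset.mem_univ, and_true,
        true_and]
    rw [h2, Finset.sum_add_distrib]
    try ring
  -- E := Den - S0 tends to 0 at scale M²
  have hElim : Tendsto (fun M : ℕ => (Den M - S0 M) / (M:ℝ) ^ 2) atTop (nhds 0) := by
    have hEq : ∀ M : ℕ, (Den M - S0 M) / (M:ℝ) ^ 2 =
        (∑ u ∈ Finset.univ.erase jk,
          (p u * (T u M / (M:ℝ) ^ 2) + p u * (q u M / (M:ℝ) ^ 2)))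
        + (∑ u ∈ P.erase jk,
          (2 * p u * Real.sqrt (p jk * p u) * τ) * (b u M * g u M / (M:ℝ) ^ 2))
        + (p jk * (T jk M / (M:ℝ) ^ 2) + σ2 * (t M / (M:ℝ) ^ 2)) := by
      intro M
      rw [hDen1 M]
      have h1 : (∑ u ∈ Finset.univ.erase jk,
          (p u * (T u M / (M:ℝ) ^ 2) + p u * (q u M / (M:ℝ) ^ 2)))
          = (∑ u ∈ Finset.univ.erase jk, p u * (T u M + q u M)) / (M:ℝ) ^ 2 := by
        rw [Finset.sum_div]; exact Finset.sum_congr rfl fun u _ => by ring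
      have h2 : (∑ u ∈ P.erase jk,
          (2 * p u * Real.sqrt (p jk * p u) * τ) * (b u M * g u M / (M:ℝ) ^ 2))
          = (∑ u ∈ P.erase jk,
            2 * p u * Real.sqrt (p jk * p u) * τ * b u M * g u M) / (M:ℝ) ^ 2 := by
        rw [Finset.sum_div]; exact Finset.sum_congr rfl fun u _ => by ring
      rw [h1, h2]; ring
    have l1 : Tendsto (fun M : ℕ => ∑ u ∈ Finset.univ.erase jk,
        (p u * (T u M / (M:ℝ) ^ 2) + p u * (q u M / (M:ℝ) ^ 2))) atTop (nhds 0) := by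
      have hterm : ∀ u ∈ Finset.univ.erase jk, Tendsto
          (fun M : ℕ => p u * (T u M / (M:ℝ) ^ 2) + p u * (q u M / (M:ℝ) ^ 2))
          atTop (nhds 0) := by
        intro u hu
        have hu' : u ≠ jk := (Finset.mem_erase.mp hu).1
        have lT : Tendsto (fun M : ℕ => T u M / (M:ℝ) ^ 2) atTop (nhds 0) :=
          tendsto_linear_div_sq (by
            filter_upwards [hKT u] with M h; exact ⟨hT0 u M, h⟩)
        have := (lT.const_mul (p u)).add ((hqlim u hu').const_mul (p u))
        simpa using this
      have hsum := tendsto_finset_sum (Finset.univ.erase jk) hterm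
      simpa using hsum
    have l2 : Tendsto (fun M : ℕ => ∑ u ∈ P.erase jk,
        (2 * p u * Real.sqrt (p jk * p u) * τ) * (b u M * g u M / (M:ℝ) ^ 2))
        atTop (nhds 0) := by
      have hterm : ∀ u ∈ P.erase jk, Tendsto
          (fun M : ℕ =>
            (2 * p u * Real.sqrt (p jk * p u) * τ) * (b u M * g u M / (M:ℝ) ^ 2))
          atTop (nhds 0) := by
        intro u hu
        have hu' : u ≠ jk := (Finset.mem_erase.mp hu).1
        have lbg : Tendsto (fun M : ℕ => b u M * g u M / (M:ℝ) ^ 2) atTop (nhds 0) :=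
          tendsto_bg_div_sq (fun M => ⟨hb0 u M, hKb u M⟩) (hglim u hu')
        simpa using lbg.const_mul (2 * p u * Real.sqrt (p jk * p u) * τ)
      have hsum := tendsto_finset_sum (P.erase jk) hterm
      simpa using hsum
    have l3 : Tendsto (fun M : ℕ => p jk * (T jk M / (M:ℝ) ^ 2) + σ2 * (t M / (M:ℝ) ^ 2))
        atTop (nhds 0) := by
      have lT : Tendsto (fun M : ℕ => T jk M / (M:ℝ) ^ 2) atTop (nhds 0) :=
        tendsto_linear_div_sq (by
          filter_upwards [hKT jk] with M h; exact ⟨hT0 jk M, h⟩)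
      have lt2 : Tendsto (fun M : ℕ => t M / (M:ℝ) ^ 2) atTop (nhds 0) :=
        tendsto_linear_div_sq (by
          filter_upwards [ht_lb, ht_ub] with M h1 h2
          exact ⟨le_trans (by positivity) h1, h2⟩)
      have := (lT.const_mul (p jk)).add (lt2.const_mul σ2)
      simpa using this
    have lall := (l1.add l2).add l3
    rw [show (0:ℝ) + 0 + 0 = 0 from by ring] at lall
    exact Tendsto.congr (fun M => (hEq M).symm) lall
  constructor
  · -- part (a)
    intro hbP
    have hS0lim : Tendsto (fun M : ℕ => S0 M / (M:ℝ) ^ 2) atTop (nhds 0) := by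
      have hEq : ∀ M : ℕ, S0 M / (M:ℝ) ^ 2
          = ∑ u ∈ P.erase jk, (p u ^ 2 * p jk * τ ^ 2) * (b u M / (M:ℝ)) ^ 2 := by
        intro M
        rw [hS0M M]
        rw [Finset.sum_div]
        exact Finset.sum_congr rfl fun u _ => by ring
      have hterm : ∀ u ∈ P.erase jk, Tendsto
          (fun M : ℕ => (p u ^ 2 * p jk * τ ^ 2) * (b u M / (M:ℝ)) ^ 2)
          atTop (nhds 0) := by
        intro u hu
        have := ((hbP u hu).pow 2).const_mul (p u ^ 2 * p jk * τ ^ 2)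
        simpa using this
      have hsum := tendsto_finset_sum (P.erase jk) hterm
      rw [show (∑ _u ∈ P.erase jk, (0:ℝ)) = 0 from by simp] at hsum
      exact Tendsto.congr (fun M => (hEq M).symm) hsum
    have hDlim : Tendsto (fun M : ℕ => Den M / (M:ℝ) ^ 2) atTop (nhds 0) := by
      have hadd := hElim.add hS0lim
      rw [show (0:ℝ) + 0 = 0 from by ring] at hadd
      exact Tendsto.congr (fun M => by ring) hadd
    exact tendsto_partA hpjk hδt ht_lb hDenpos hDlim
  · -- part (b)
    rintro ⟨c, hc, M₀, hcM⟩
    have hne : (P.erase jk).Nonempty := by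
      by_contra h
      rw [Finset.not_nonempty_iff_eq_empty] at h
      have h2 := hcM M₀ le_rfl
      rw [h] at h2
      simp at h2
      linarith
    set α := (P.erase jk).inf' hne (fun u => p u ^ 2 * p jk * τ ^ 2) with hαdef
    have hα : 0 < α := by
      rw [hαdef, Finset.lt_inf'_iff]
      intro u hu
      exact mul_pos (mul_pos (pow_pos (hp u) 2) hpjk) (pow_pos hτ 2)
    have hcard : 0 < ((P.erase jk).card : ℝ) := by
      exact_mod_cast Finset.card_pos.mpr hne
    set c3 := α * c ^ 2 / ((P.erase jk).card : ℝ) with hc3def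
    have hc3pos : 0 < c3 := by positivity
    have hS0lb : ∀ᶠ M : ℕ in atTop, c3 * (M:ℝ) ^ 2 ≤ S0 M := by
      filter_upwards [eventually_ge_atTop (max M₀ 1)] with M hM
      have hM₀ : M ≥ M₀ := le_trans (le_max_left _ _) hM
      have hM1 : (1:ℝ) ≤ M := by exact_mod_cast le_trans (le_max_right _ _) hM
      have hMpos : (0:ℝ) < M := by linarith
      have h1 : c * M ≤ ∑ u ∈ P.erase jk, b u M := by
        have h0 := hcM M hM₀
        rw [← Finset.sum_div, le_div_iff₀ hMpos] at h0
        linarith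
      have h3 : (∑ u ∈ P.erase jk, b u M) ^ 2
          ≤ ((P.erase jk).card : ℝ) * ∑ u ∈ P.erase jk, (b u M) ^ 2 :=
        sq_sum_le_card_mul_sum_sq
      have h4 : α * ∑ u ∈ P.erase jk, (b u M) ^ 2 ≤ S0 M := by
        rw [hS0M M]
        rw [Finset.mul_sum]
        refine Finset.sum_le_sum fun u hu => ?_
        exact mul_le_mul_of_nonneg_right (Finset.inf'_le _ hu) (sq_nonneg _)
      have h5 : 0 ≤ ∑ u ∈ P.erase jk, b u M :=
        Finset.sum_nonneg fun u _ => hb0 u M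
      have h6 : (c * M) ^ 2 ≤ (∑ u ∈ P.erase jk, b u M) ^ 2 := by
        apply sq_le_sq' _ h1
        nlinarith
      rw [hc3def, div_mul_eq_mul_div, div_le_iff₀ hcard]
      calc α * c ^ 2 * (M:ℝ) ^ 2 = α * (c * M) ^ 2 := by ring
        _ ≤ α * (∑ u ∈ P.erase jk, b u M) ^ 2 :=
            mul_le_mul_of_nonneg_left h6 hα.le
        _ ≤ α * (((P.erase jk).card : ℝ) * ∑ u ∈ P.erase jk, (b u M) ^ 2) :=
            mul_le_mul_of_nonneg_left h3 hα.le
        _ = (α * ∑ u ∈ P.erase jk, (b u M) ^ 2) * ((P.erase jk).card : ℝ) := by ring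
        _ ≤ S0 M * ((P.erase jk).card : ℝ) :=
            mul_le_mul_of_nonneg_right h4 hcard.le
    have hEsmall : ∀ᶠ M : ℕ in atTop, |Den M - S0 M| ≤ c3 / 2 * (M:ℝ) ^ 2 := by
      have h0 : ∀ᶠ M : ℕ in atTop, |(Den M - S0 M) / (M:ℝ) ^ 2| < c3 / 2 :=
        hElim.abs.eventually (gt_mem_nhds (by simpa using half_pos hc3pos))
      filter_upwards [h0, eventually_ge_atTop 1] with M h1 hM1
      have hMpos : (0:ℝ) < M := by exact_mod_cast hM1
      rw [abs_div, abs_of_nonneg (by positivity : (0:ℝ) ≤ (M:ℝ)^2),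
        div_lt_iff₀ (by positivity)] at h1
      linarith
    have hDenlb : ∀ᶠ M : ℕ in atTop, c3 / 2 * (M:ℝ) ^ 2 ≤ Den M := by
      filter_upwards [hS0lb, hEsmall] with M h1 h2
      have h3 := abs_le.mp h2
      linarith [h3.1]
    apply squeeze_zero_norm'
      (a := fun M : ℕ => (p jk * Kt ^ 2 / (c3 ^ 2 / 2)) * |(Den M - S0 M) / (M:ℝ) ^ 2|)
    · filter_upwards [ht_lb, ht_ub, hS0lb, hDenlb, hDenpos, eventually_ge_atTop 1]
        with M h1 h2 h3 h4 h5 h6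
      have hMpos : (0:ℝ) < M := by exact_mod_cast h6
      have htpos : 0 < t M := lt_of_lt_of_le (by positivity) h1
      have hS0pos : 0 < S0 M := lt_of_lt_of_le (by positivity) h3
      have hsub : (p jk ^ 2 * τ * a M + p jk * n M) /
          (∑ u ∈ P.erase jk, p u ^ 2 * p jk * τ ^ 2 * (b u M) ^ 2 / t M)
          = p jk * t M ^ 2 / S0 M := by
        rw [← Finset.sum_div, div_div_eq_mul_div]
        rw [show p jk ^ 2 * τ * a M + p jk * n M = p jk * t M from by
          simp only [t]; ring]
        rw [← hS0M M]
        ring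
      rw [hsub]
      have hexp : p jk * t M ^ 2 / Den M - p jk * t M ^ 2 / S0 M
          = p jk * t M ^ 2 * (S0 M - Den M) / (Den M * S0 M) := by
        field_simp
      rw [hexp, Real.norm_eq_abs, abs_div, abs_mul,
        abs_of_nonneg (by positivity : (0:ℝ) ≤ p jk * t M ^ 2),
        abs_of_pos (mul_pos h5 hS0pos)]
      rw [abs_sub_comm (S0 M) (Den M)]
      have hnum : p jk * t M ^ 2 * |Den M - S0 M|
          ≤ p jk * Kt ^ 2 * (M:ℝ) ^ 2 * |Den M - S0 M| := by
        have ht2 : t M ^ 2 ≤ Kt ^ 2 * (M:ℝ) ^ 2 := by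
          have h7 := pow_le_pow_left₀ (le_trans (by positivity) h1) h2 2
          calc t M ^ 2 ≤ (Kt * (M:ℝ)) ^ 2 := h7
            _ = Kt ^ 2 * (M:ℝ) ^ 2 := by ring
        have h8 := mul_le_mul_of_nonneg_right
          (mul_le_mul_of_nonneg_left ht2 hpjk.le) (abs_nonneg (Den M - S0 M))
        linarith [h8]
      have hden : (c3 / 2 * (M:ℝ) ^ 2) * (c3 * (M:ℝ) ^ 2) ≤ Den M * S0 M :=
        mul_le_mul h4 h3 (by positivity) (le_of_lt h5)
      calc p jk * t M ^ 2 * |Den M - S0 M| / (Den M * S0 M)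
          ≤ (p jk * Kt ^ 2 * (M:ℝ) ^ 2 * |Den M - S0 M|) /
            ((c3 / 2 * (M:ℝ) ^ 2) * (c3 * (M:ℝ) ^ 2)) :=
            div_le_div₀ (by positivity) hnum (by positivity) hden
        _ = (p jk * Kt ^ 2 / (c3 ^ 2 / 2)) * |(Den M - S0 M) / (M:ℝ) ^ 2| := by
            rw [abs_div, abs_of_nonneg (by positivity : (0:ℝ) ≤ ((M:ℝ))^2)]
            field_simp
    · have hfin := hElim.abs.const_mul (p jk * Kt ^ 2 / (c3 ^ 2 / 2))
      simpa using hfin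


end Stmt13Aux

set_option maxHeartbeats 1600000 in
/-- **Theorem 7, UL asymptotics with EW-MMSE estimation.** -/
theorem stmt13 (L K : ℕ) (jk : Fin L × Fin K)
    (P : Finset (Fin L × Fin K)) (hjkP : jk ∈ P)
    (p : Fin L × Fin K → ℝ) (hp : ∀ u, 0 < p u)
    (τ σ2 : ℝ) (hτ : 0 < τ) (hσ2 : 0 < σ2)
    (R : (Fin L × Fin K) → (M : ℕ) → Matrix (Fin M) (Fin M) ℂ)
    (hbar : (Fin L × Fin K) → (M : ℕ) → (Fin M → ℂ))
    (hRpsd : ∀ u M, (R u M).PosSemidef)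
    (hA1a : ∀ u, ∃ C : ℝ, ∀ M,
      (((C : ℂ) • (1 : Matrix (Fin M) (Fin M) ℂ)) - R u M).PosSemidef)
    (hA1b : ∀ u, 0 < Filter.liminf (fun M : ℕ => ((R u M).trace).re / M) Filter.atTop)
    (hA2 : ∀ u, ∃ C : ℝ, ∀ M : ℕ, (star (hbar u M) ⬝ᵥ hbar u M).re / M ≤ C)
    (hA3 : ∀ u v, u ≠ v →
      Tendsto (fun M : ℕ => ‖star (hbar u M) ⬝ᵥ hbar v M‖ / M) atTop (nhds 0)) :
    -- `Ψ⁻¹(M) = Σ_{u∈P} p_u τ_p R_u(M) + σ² I`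
    let Ψinv : (M : ℕ) → Matrix (Fin M) (Fin M) ℂ :=
      fun M => (∑ u ∈ P, ((p u * τ : ℝ) : ℂ) • R u M) + ((σ2 : ℝ) : ℂ) • 1
    -- `D_u(M)`: diagonal part of `R_u(M)`
    let D : (Fin L × Fin K) → (M : ℕ) → Matrix (Fin M) (Fin M) ℂ :=
      fun u M => Matrix.diagonal fun m => R u M m m
    -- `Λ(M)`: reciprocals of the diagonal of `Ψ⁻¹(M)`
    let Λ : (M : ℕ) → Matrix (Fin M) (Fin M) ℂ :=
      fun M => Matrix.diagonal fun m => (Ψinv M m m)⁻¹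
    -- `Σ_{jk}(M) = p_{jk} τ_p D_{jk} Λ Ψ⁻¹ Λ D_{jk}`
    let Sjk : (M : ℕ) → Matrix (Fin M) (Fin M) ℂ :=
      fun M => ((p jk * τ : ℝ) : ℂ) • (D jk M * Λ M * Ψinv M * Λ M * D jk M)
    -- interference term `χ_{li}`
    let χ : (Fin L × Fin K) → ℕ → ℝ := fun u M =>
      ((R u M * Sjk M).trace).re
        + (star (hbar jk M) ⬝ᵥ (R u M *ᵥ hbar jk M)).re
        + (star (hbar u M) ⬝ᵥ (Sjk M *ᵥ hbar u M)).re
        + Complex.normSq (star (hbar jk M) ⬝ᵥ hbar u M)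
        + (if u ∈ P then
            p jk * p u * τ ^ 2 * (((D u M * Λ M * D jk M).trace).re) ^ 2
              + 2 * Real.sqrt (p jk * p u) * τ * (((D u M * Λ M * D jk M).trace).re)
                * (star (hbar jk M) ⬝ᵥ hbar u M).re
          else 0)
    -- the closed-form UL SINR `γ^{ew}(M)`
    let γ : ℕ → ℝ := fun M =>
      p jk * (p jk * τ * (((D jk M * Λ M * D jk M).trace).re)
          + (star (hbar jk M) ⬝ᵥ hbar jk M).re) ^ 2
        / ((∑ u : Fin L × Fin K, p u * χ u M)
            - p jk * (p jk * τ * (((D jk M * Λ M * D jk M).trace).re)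
                + (star (hbar jk M) ⬝ᵥ hbar jk M).re) ^ 2
            + σ2 * (((Sjk M).trace).re + (star (hbar jk M) ⬝ᵥ hbar jk M).re))
    -- (a)
    ((∀ u ∈ P.erase jk,
        Tendsto (fun M : ℕ => ((D u M * D jk M).trace).re / M) atTop (nhds 0)) →
      Tendsto γ atTop atTop)
    -- (b)
    ∧ ((∃ c > 0, ∃ M₀ : ℕ, ∀ M ≥ M₀,
          c ≤ ∑ u ∈ P.erase jk, ((D u M * D jk M).trace).re / M) →
      Tendsto (fun M : ℕ => γ M -
          (p jk ^ 2 * τ * (((D jk M * Λ M * D jk M).trace).re)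
            + p jk * (star (hbar jk M) ⬝ᵥ hbar jk M).re)
          / (∑ u ∈ P.erase jk,
              p u ^ 2 * p jk * τ ^ 2 * (((D u M * Λ M * D jk M).trace).re) ^ 2
                / (p jk * τ * (((D jk M * Λ M * D jk M).trace).re)
                    + (star (hbar jk M) ⬝ᵥ hbar jk M).re)))
        atTop (nhds 0)) := by
  intro Ψinv D Λ Sjk χ γ
  classical
  -- diagonal entries of R are real and nonnegative
  have hRo : ∀ u (M : ℕ) (m : Fin M), R u M m m = ((R u M m m).re : ℂ) :=
    fun u M m => Stmt13Aux.nonneg_eq_re (Stmt13Aux.psd_diag_nonneg (hRpsd u M) m)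
  have hr0 : ∀ u (M : ℕ) (m : Fin M), 0 ≤ (R u M m m).re :=
    fun u M m => (Complex.le_def.mp (Stmt13Aux.psd_diag_nonneg (hRpsd u M) m)).1
  -- uniform bounds on R
  choose C hC using hA1a
  set C' : (Fin L × Fin K) → ℝ := fun u => max (C u) 0 with hC'def
  have hC'0 : ∀ u, 0 ≤ C' u := fun u => le_max_right _ _
  have hCpsd : ∀ u (M : ℕ),
      (((C' u : ℝ) : ℂ) • (1 : Matrix (Fin M) (Fin M) ℂ) - R u M).PosSemidef := by
    intro u M
    have heq : ((C' u : ℝ) : ℂ) • (1 : Matrix (Fin M) (Fin M) ℂ) - R u M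
        = (((C u : ℝ) : ℂ) • (1 : Matrix (Fin M) (Fin M) ℂ) - R u M)
          + (((C' u - C u : ℝ) : ℂ) • (1 : Matrix (Fin M) (Fin M) ℂ)) := by
      push_cast
      module
    rw [heq]
    exact (hC u M).add (Stmt13Aux.psd_smul .one (by simp [hC'def]))
  have hrC : ∀ u (M : ℕ) (m : Fin M), (R u M m m).re ≤ C' u := by
    intro u M m
    have h := (Complex.le_def.mp (Stmt13Aux.psd_diag_nonneg (hCpsd u M) m)).1
    simp only [Matrix.sub_apply, Matrix.smul_apply, Matrix.one_apply_eq,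
      Complex.sub_re, Complex.zero_re, smul_eq_mul, mul_one, Complex.ofReal_re] at h
    linarith
  -- the real diagonal of Ψ⁻¹
  set ψR : (M : ℕ) → Fin M → ℝ :=
    fun M m => (∑ u ∈ P, p u * τ * (R u M m m).re) + σ2 with hψdef
  have hψM : ∀ (M : ℕ) (m : Fin M),
      ψR M m = (∑ u ∈ P, p u * τ * (R u M m m).re) + σ2 := fun _ _ => rfl
  have hψlb : ∀ (M : ℕ) (m : Fin M), σ2 ≤ ψR M m := by
    intro M m
    rw [hψM]
    have : 0 ≤ ∑ u ∈ P, p u * τ * (R u M m m).re :=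
      Finset.sum_nonneg fun u _ =>
        mul_nonneg (mul_nonneg (hp u).le hτ.le) (hr0 u M m)
    linarith
  have hψpos : ∀ (M : ℕ) (m : Fin M), 0 < ψR M m :=
    fun M m => lt_of_lt_of_le hσ2 (hψlb M m)
  set B : ℝ := (∑ u ∈ P, p u * τ * C' u) + σ2 with hBdef
  have hψub : ∀ (M : ℕ) (m : Fin M), ψR M m ≤ B := by
    intro M m
    rw [hψM, hBdef]
    have : (∑ u ∈ P, p u * τ * (R u M m m).re) ≤ ∑ u ∈ P, p u * τ * C' u :=
      Finset.sum_le_sum fun u _ =>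
        mul_le_mul_of_nonneg_left (hrC u M m) (mul_nonneg (hp u).le hτ.le)
    linarith
  have hBpos : 0 < B := by
    rw [hBdef]
    have : 0 ≤ ∑ u ∈ P, p u * τ * C' u :=
      Finset.sum_nonneg fun u _ =>
        mul_nonneg (mul_nonneg (hp u).le hτ.le) (hC'0 u)
    linarith
  -- entries of Ψ⁻¹
  have hΨentry : ∀ (M : ℕ) (m : Fin M), Ψinv M m m = ((ψR M m : ℝ) : ℂ) := by
    intro M m
    simp only [Ψinv]
    rw [Matrix.add_apply, Matrix.smul_apply, Matrix.one_apply_eq, Matrix.sum_apply]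
    have hterm : ∀ u ∈ P, (((p u * τ : ℝ) : ℂ) • R u M) m m
        = ((p u * τ * (R u M m m).re : ℝ) : ℂ) := by
      intro u _
      rw [Matrix.smul_apply, smul_eq_mul]
      conv_lhs => rw [hRo u M m]
      push_cast
      ring
    rw [Finset.sum_congr rfl hterm, hψM, smul_eq_mul, mul_one]
    push_cast
    ring
  -- diagonal form of D and Λ
  have hDdiag : ∀ u (M : ℕ),
      D u M = Matrix.diagonal (fun m => (((R u M m m).re : ℝ) : ℂ)) := by
    intro u M
    simp only [D]
    exact congrArg Matrix.diagonal (funext fun m => hRo u M m)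
  have hΛdiag : ∀ (M : ℕ),
      Λ M = Matrix.diagonal (fun m => (((ψR M m)⁻¹ : ℝ) : ℂ)) := by
    intro M
    simp only [Λ]
    refine congrArg Matrix.diagonal (funext fun m => ?_)
    rw [hΨentry M m]
    exact (Complex.ofReal_inv _).symm
  -- trace formulas
  have hbtrace : ∀ u (M : ℕ), (D u M * Λ M * D jk M).trace
      = ((∑ m, (R u M m m).re * (ψR M m)⁻¹ * (R jk M m m).re : ℝ) : ℂ) := by
    intro u M
    rw [hDdiag u M, hΛdiag M, hDdiag jk M, Matrix.diagonal_mul_diagonal,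
      Matrix.diagonal_mul_diagonal, Matrix.trace_diagonal]
    push_cast
    rfl
  have hbre : ∀ u (M : ℕ), ((D u M * Λ M * D jk M).trace).re
      = ∑ m, (R u M m m).re * (ψR M m)⁻¹ * (R jk M m m).re := by
    intro u M
    rw [hbtrace u M]
    exact Complex.ofReal_re _
  have hetrace : ∀ u (M : ℕ), ((D u M * D jk M).trace).re
      = ∑ m, (R u M m m).re * (R jk M m m).re := by
    intro u M
    rw [hDdiag u M, hDdiag jk M, Matrix.diagonal_mul_diagonal, Matrix.trace_diagonal]
    rw [show (∑ m, (((R u M m m).re : ℝ) : ℂ) * (((R jk M m m).re : ℝ) : ℂ))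
        = ((∑ m, (R u M m m).re * (R jk M m m).re : ℝ) : ℂ) from by push_cast; rfl]
    exact Complex.ofReal_re _
  -- bounds on b
  have hb0 : ∀ u (M : ℕ), 0 ≤ ((D u M * Λ M * D jk M).trace).re := by
    intro u M
    rw [hbre u M]
    exact Finset.sum_nonneg fun m _ => mul_nonneg
      (mul_nonneg (hr0 u M m) (inv_nonneg.mpr (hψpos M m).le)) (hr0 jk M m)
  have hbe_ub : ∀ u (M : ℕ), ((D u M * Λ M * D jk M).trace).re
      ≤ σ2⁻¹ * ((D u M * D jk M).trace).re := by
    intro u M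
    rw [hbre u M, hetrace u M, Finset.mul_sum]
    refine Finset.sum_le_sum fun m _ => ?_
    have h1 : (ψR M m)⁻¹ ≤ σ2⁻¹ := inv_anti₀ hσ2 (hψlb M m)
    have h2 : 0 ≤ (R u M m m).re * (R jk M m m).re :=
      mul_nonneg (hr0 u M m) (hr0 jk M m)
    calc (R u M m m).re * (ψR M m)⁻¹ * (R jk M m m).re
        = (ψR M m)⁻¹ * ((R u M m m).re * (R jk M m m).re) := by ring
      _ ≤ σ2⁻¹ * ((R u M m m).re * (R jk M m m).re) :=
          mul_le_mul_of_nonneg_right h1 h2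
  have hbe_lb : ∀ u (M : ℕ), B⁻¹ * ((D u M * D jk M).trace).re
      ≤ ((D u M * Λ M * D jk M).trace).re := by
    intro u M
    rw [hbre u M, hetrace u M, Finset.mul_sum]
    refine Finset.sum_le_sum fun m _ => ?_
    have h1 : B⁻¹ ≤ (ψR M m)⁻¹ := inv_anti₀ (hψpos M m) (hψub M m)
    have h2 : 0 ≤ (R u M m m).re * (R jk M m m).re :=
      mul_nonneg (hr0 u M m) (hr0 jk M m)
    calc B⁻¹ * ((R u M m m).re * (R jk M m m).re)
        ≤ (ψR M m)⁻¹ * ((R u M m m).re * (R jk M m m).re) :=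
          mul_le_mul_of_nonneg_right h1 h2
      _ = (R u M m m).re * (ψR M m)⁻¹ * (R jk M m m).re := by ring
  have hKb : ∀ u, ∀ (M : ℕ), ((D u M * Λ M * D jk M).trace).re
      ≤ (C' u * C' jk * σ2⁻¹) * M := by
    intro u M
    rw [hbre u M]
    calc (∑ m, (R u M m m).re * (ψR M m)⁻¹ * (R jk M m m).re)
        ≤ ∑ _m : Fin M, C' u * σ2⁻¹ * C' jk := by
          refine Finset.sum_le_sum fun m _ => ?_
          have h1 : (ψR M m)⁻¹ ≤ σ2⁻¹ := inv_anti₀ hσ2 (hψlb M m)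
          have h2 : 0 ≤ (ψR M m)⁻¹ := (inv_nonneg.mpr (hψpos M m).le)
          have := mul_le_mul (mul_le_mul (hrC u M m) h1 h2 (hC'0 u))
            (hrC jk M m) (hr0 jk M m)
            (mul_nonneg (hC'0 u) (inv_nonneg.mpr hσ2.le))
          exact this
      _ = (C' u * C' jk * σ2⁻¹) * M := by
          rw [Finset.sum_const, Finset.card_univ, Fintype.card_fin]
          simp [nsmul_eq_mul]
          ring
  -- the matrix N = D_jk Λ
  set NN : (M : ℕ) → Matrix (Fin M) (Fin M) ℂ :=
    fun M => Matrix.diagonal (fun m => (((R jk M m m).re * (ψR M m)⁻¹ : ℝ) : ℂ))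
    with hNNdef
  have hNM : ∀ (M : ℕ), NN M
      = Matrix.diagonal (fun m => (((R jk M m m).re * (ψR M m)⁻¹ : ℝ) : ℂ)) :=
    fun _ => rfl
  have hNherm : ∀ (M : ℕ), (NN M)ᴴ = NN M := by
    intro M
    rw [hNM, Matrix.diagonal_conjTranspose]
    refine congrArg Matrix.diagonal (funext fun m => ?_)
    simp [Pi.star_apply, Complex.star_def, Complex.conj_ofReal]
  have hDΛ : ∀ (M : ℕ), D jk M * Λ M = NN M := by
    intro M
    rw [hDdiag jk M, hΛdiag M, hNM, Matrix.diagonal_mul_diagonal]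
    refine congrArg Matrix.diagonal (funext fun m => ?_)
    push_cast
    ring
  have hΛD : ∀ (M : ℕ), Λ M * D jk M = NN M := by
    intro M
    rw [hDdiag jk M, hΛdiag M, hNM, Matrix.diagonal_mul_diagonal]
    refine congrArg Matrix.diagonal (funext fun m => ?_)
    push_cast
    ring
  have hSjkEq : ∀ (M : ℕ), Sjk M = ((p jk * τ : ℝ) : ℂ) • (NN M * Ψinv M * NN M) := by
    intro M
    simp only [Sjk]
    congr 1
    rw [hDΛ M, Matrix.mul_assoc (NN M * Ψinv M), hΛD M]
  have hΨpsd : ∀ (M : ℕ), (Ψinv M).PosSemidef := by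
    intro M
    simp only [Ψinv]
    exact (Stmt13Aux.psd_sum P _ (fun u _ =>
      Stmt13Aux.psd_smul (hRpsd u M) (mul_nonneg (hp u).le hτ.le))).add
      (Stmt13Aux.psd_smul .one hσ2.le)
  have hSpsd : ∀ (M : ℕ), (Sjk M).PosSemidef := by
    intro M
    rw [hSjkEq M]
    refine Stmt13Aux.psd_smul ?_ (mul_nonneg (hp jk).le hτ.le)
    have h := (hΨpsd M).mul_mul_conjTranspose_same (NN M)
    rwa [hNherm M] at h
  -- Loewner upper bound for Ψ⁻¹
  have hΨloew : ∀ (M : ℕ),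
      (((B : ℝ) : ℂ) • (1 : Matrix (Fin M) (Fin M) ℂ) - Ψinv M).PosSemidef := by
    intro M
    have heq : ((B : ℝ) : ℂ) • (1 : Matrix (Fin M) (Fin M) ℂ) - Ψinv M
        = ∑ u ∈ P, ((p u * τ : ℝ) : ℂ) •
          (((C' u : ℝ) : ℂ) • (1 : Matrix (Fin M) (Fin M) ℂ) - R u M) := by
      simp only [Ψinv]
      rw [hBdef]
      rw [Finset.sum_congr rfl (fun u (_ : u ∈ P) => smul_sub ((p u * τ : ℝ) : ℂ)
        (((C' u : ℝ) : ℂ) • (1 : Matrix (Fin M) (Fin M) ℂ)) (R u M))]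
      rw [Finset.sum_sub_distrib]
      have h1 : (∑ u ∈ P, ((p u * τ : ℝ) : ℂ) • (((C' u : ℝ) : ℂ)
          • (1 : Matrix (Fin M) (Fin M) ℂ)))
          = ((∑ u ∈ P, p u * τ * C' u : ℝ) : ℂ) • (1 : Matrix (Fin M) (Fin M) ℂ) := by
        rw [Finset.sum_congr rfl (fun u (_ : u ∈ P) => smul_smul ((p u * τ : ℝ) : ℂ)
          (((C' u : ℝ) : ℂ)) (1 : Matrix (Fin M) (Fin M) ℂ)), ← Finset.sum_smul]
        congr 1
        push_cast
        rfl
      rw [h1]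
      push_cast
      module
    rw [heq]
    exact Stmt13Aux.psd_sum P _ (fun u _ =>
      Stmt13Aux.psd_smul (hCpsd u M) (mul_nonneg (hp u).le hτ.le))
  -- Loewner upper bound for Sjk
  set κ : ℝ := p jk * τ * B * (C' jk / σ2) ^ 2 with hκdef
  have hκ0 : 0 ≤ κ := by
    rw [hκdef]
    have := (hp jk).le
    positivity
  have hν : ∀ (M : ℕ) (m : Fin M), 0 ≤ (R jk M m m).re * (ψR M m)⁻¹
      ∧ (R jk M m m).re * (ψR M m)⁻¹ ≤ C' jk / σ2 := by
    intro M m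
    constructor
    · exact mul_nonneg (hr0 jk M m) (inv_nonneg.mpr (hψpos M m).le)
    · rw [← div_eq_mul_inv]
      exact div_le_div₀ (hC'0 jk) (hrC jk M m) hσ2 (hψlb M m)
  have hSloew : ∀ (M : ℕ),
      (((κ : ℝ) : ℂ) • (1 : Matrix (Fin M) (Fin M) ℂ) - Sjk M).PosSemidef := by
    intro M
    have hNN2 : NN M * NN M = Matrix.diagonal
        (fun m => ((((R jk M m m).re * (ψR M m)⁻¹) ^ 2 : ℝ) : ℂ)) := by
      rw [hNM, Matrix.diagonal_mul_diagonal]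
      refine congrArg Matrix.diagonal (funext fun m => ?_)
      push_cast
      ring
    have heq : ((κ : ℝ) : ℂ) • (1 : Matrix (Fin M) (Fin M) ℂ) - Sjk M
        = ((p jk * τ : ℝ) : ℂ) •
            (NN M * (((B : ℝ) : ℂ) • (1 : Matrix (Fin M) (Fin M) ℂ) - Ψinv M) * NN M)
          + Matrix.diagonal (fun m => ((p jk * τ * B *
              ((C' jk / σ2) ^ 2 - ((R jk M m m).re * (ψR M m)⁻¹) ^ 2) : ℝ) : ℂ)) := by
      rw [hSjkEq M, Matrix.mul_sub, Matrix.sub_mul, smul_sub]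
      have h2 : NN M * (((B : ℝ) : ℂ) • (1 : Matrix (Fin M) (Fin M) ℂ)) * NN M
          = ((B : ℝ) : ℂ) • (NN M * NN M) := by
        rw [Matrix.mul_smul, Matrix.mul_one, Matrix.smul_mul]
      rw [h2, hNN2]
      have h3 : ((κ : ℝ) : ℂ) • (1 : Matrix (Fin M) (Fin M) ℂ)
          = ((p jk * τ : ℝ) : ℂ) • (((B : ℝ) : ℂ) • Matrix.diagonal
              (fun m => ((((R jk M m m).re * (ψR M m)⁻¹) ^ 2 : ℝ) : ℂ)))
            + Matrix.diagonal (fun m => ((p jk * τ * B *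
              ((C' jk / σ2) ^ 2 - ((R jk M m m).re * (ψR M m)⁻¹) ^ 2) : ℝ) : ℂ)) := by
        rw [smul_smul, ← Matrix.diagonal_one, ← Matrix.diagonal_smul,
          ← Matrix.diagonal_smul, Matrix.diagonal_add]
        refine congrArg Matrix.diagonal (funext fun m => ?_)
        simp only [Pi.smul_apply, Pi.add_apply, smul_eq_mul, Pi.one_apply]
        rw [hκdef]
        push_cast
        ring
      rw [h3]
      abel
    rw [heq]
    refine Matrix.PosSemidef.add ?_ ?_
    · refine Stmt13Aux.psd_smul ?_ (mul_nonneg (hp jk).le hτ.le)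
      have h := (hΨloew M).mul_mul_conjTranspose_same (NN M)
      rwa [hNherm M] at h
    · refine Matrix.posSemidef_diagonal_iff.mpr fun m => ?_
      rw [Complex.zero_le_real]
      have h1 := (hν M m).1
      have h2 := (hν M m).2
      have h3 : ((R jk M m m).re * (ψR M m)⁻¹) ^ 2 ≤ (C' jk / σ2) ^ 2 :=
        pow_le_pow_left₀ h1 h2 2
      have h4 : 0 ≤ p jk * τ * B := mul_nonneg (mul_nonneg (hp jk).le hτ.le) hBpos.le
      exact mul_nonneg h4 (sub_nonneg.mpr h3)
  -- trace of Sjk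
  have hstrace : ∀ (M : ℕ), ((Sjk M).trace).re
      = p jk * τ * ((D jk M * Λ M * D jk M).trace).re := by
    intro M
    rw [hSjkEq M, Matrix.trace_smul, hbre jk M]
    rw [hNM, Stmt13Aux.trace_diagonal_mul_mul_diagonal]
    have hterm : ∀ (m : Fin M) (_ : m ∈ Finset.univ),
        (((R jk M m m).re * (ψR M m)⁻¹ : ℝ) : ℂ) * Ψinv M m m *
          (((R jk M m m).re * (ψR M m)⁻¹ : ℝ) : ℂ)
        = (((R jk M m m).re * (ψR M m)⁻¹ * (R jk M m m).re : ℝ) : ℂ) := by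
      intro m _
      rw [hΨentry M m]
      norm_cast
      field_simp [ne_of_gt (hψpos M m)]
    rw [Finset.sum_congr rfl hterm]
    rw [show (∑ m, (((R jk M m m).re * (ψR M m)⁻¹ * (R jk M m m).re : ℝ) : ℂ))
        = ((∑ m, (R jk M m m).re * (ψR M m)⁻¹ * (R jk M m m).re : ℝ) : ℂ) from by
      push_cast; rfl]
    rw [smul_eq_mul, show ((p jk * τ : ℝ) : ℂ) *
        ((∑ m, (R jk M m m).re * (ψR M m)⁻¹ * (R jk M m m).re : ℝ) : ℂ)
        = ((p jk * τ * ∑ m, (R jk M m m).re * (ψR M m)⁻¹ * (R jk M m m).re : ℝ) : ℂ)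
      from by push_cast; ring]
    exact Complex.ofReal_re _
  -- bound on a
  have hKa : ∀ (M : ℕ), ((D jk M * Λ M * D jk M).trace).re
      ≤ (C' jk * C' jk * σ2⁻¹) * M := hKb jk
  -- vector facts
  have hndef : ∀ u (M : ℕ), star (hbar u M) ⬝ᵥ hbar u M
      = ((∑ m, Complex.normSq (hbar u M m) : ℝ) : ℂ) :=
    fun u M => Stmt13Aux.star_dot_self (hbar u M)
  have hn0 : ∀ u (M : ℕ), 0 ≤ (star (hbar u M) ⬝ᵥ hbar u M).re := by
    intro u M
    rw [hndef u M, Complex.ofReal_re]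
    exact Finset.sum_nonneg fun m _ => Complex.normSq_nonneg _
  choose Cn hCn using hA2
  have hKn : ∀ u, ∀ᶠ M : ℕ in atTop, (star (hbar u M) ⬝ᵥ hbar u M).re ≤ Cn u * M := by
    intro u
    filter_upwards [eventually_ge_atTop 1] with M hM1
    have hMpos : (0:ℝ) < M := by exact_mod_cast hM1
    have := hCn u M
    rw [div_le_iff₀ hMpos] at this
    linarith
  -- T bounds
  have hT0 : ∀ u (M : ℕ), 0 ≤ ((R u M * Sjk M).trace).re
      + (star (hbar jk M) ⬝ᵥ (R u M *ᵥ hbar jk M)).re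
      + (star (hbar u M) ⬝ᵥ (Sjk M *ᵥ hbar u M)).re := by
    intro u M
    have h1 := Stmt13Aux.re_trace_mul_nonneg (hRpsd u M) (hSpsd M)
    have h2 := Stmt13Aux.re_quad_nonneg (hRpsd u M) (hbar jk M)
    have h3 := Stmt13Aux.re_quad_nonneg (hSpsd M) (hbar u M)
    linarith
  have hKT : ∀ u, ∀ᶠ M : ℕ in atTop, ((R u M * Sjk M).trace).re
      + (star (hbar jk M) ⬝ᵥ (R u M *ᵥ hbar jk M)).re
      + (star (hbar u M) ⬝ᵥ (Sjk M *ᵥ hbar u M)).re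
      ≤ (C' u * (p jk * τ * (C' jk * C' jk * σ2⁻¹)) + C' u * Cn jk + κ * Cn u) * M := by
    intro u
    filter_upwards [hKn jk, hKn u, eventually_ge_atTop 1] with M hnjk hnu hM1
    have hMpos : (0:ℝ) < M := by exact_mod_cast hM1
    have h1 : ((R u M * Sjk M).trace).re ≤ C' u * ((Sjk M).trace).re :=
      Stmt13Aux.re_trace_mul_le (hCpsd u M) (hSpsd M)
    have h1b : ((Sjk M).trace).re ≤ p jk * τ * ((C' jk * C' jk * σ2⁻¹) * M) := by
      rw [hstrace M]
      exact mul_le_mul_of_nonneg_left (hKa M) (mul_nonneg (hp jk).le hτ.le)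
    have h1c : ((R u M * Sjk M).trace).re
        ≤ C' u * (p jk * τ * (C' jk * C' jk * σ2⁻¹)) * M := by
      calc ((R u M * Sjk M).trace).re ≤ C' u * ((Sjk M).trace).re := h1
        _ ≤ C' u * (p jk * τ * ((C' jk * C' jk * σ2⁻¹) * M)) :=
            mul_le_mul_of_nonneg_left h1b (hC'0 u)
        _ = C' u * (p jk * τ * (C' jk * C' jk * σ2⁻¹)) * M := by ring
    have h2 : (star (hbar jk M) ⬝ᵥ (R u M *ᵥ hbar jk M)).re
        ≤ C' u * (star (hbar jk M) ⬝ᵥ hbar jk M).re :=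
      Stmt13Aux.re_quad_le (hCpsd u M) (hbar jk M)
    have h2b : (star (hbar jk M) ⬝ᵥ (R u M *ᵥ hbar jk M)).re ≤ C' u * Cn jk * M := by
      calc (star (hbar jk M) ⬝ᵥ (R u M *ᵥ hbar jk M)).re
          ≤ C' u * (star (hbar jk M) ⬝ᵥ hbar jk M).re := h2
        _ ≤ C' u * (Cn jk * M) := mul_le_mul_of_nonneg_left hnjk (hC'0 u)
        _ = C' u * Cn jk * M := by ring
    have h3 : (star (hbar u M) ⬝ᵥ (Sjk M *ᵥ hbar u M)).re
        ≤ κ * (star (hbar u M) ⬝ᵥ hbar u M).re :=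
      Stmt13Aux.re_quad_le (hSloew M) (hbar u M)
    have h3b : (star (hbar u M) ⬝ᵥ (Sjk M *ᵥ hbar u M)).re ≤ κ * Cn u * M := by
      calc (star (hbar u M) ⬝ᵥ (Sjk M *ᵥ hbar u M)).re
          ≤ κ * (star (hbar u M) ⬝ᵥ hbar u M).re := h3
        _ ≤ κ * (Cn u * M) := mul_le_mul_of_nonneg_left hnu hκ0
        _ = κ * Cn u * M := by ring
    linarith [h1c, h2b, h3b]
  -- q and g facts
  have hqg : ∀ u (M : ℕ), ((star (hbar jk M) ⬝ᵥ hbar u M).re) ^ 2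
      ≤ Complex.normSq (star (hbar jk M) ⬝ᵥ hbar u M) := by
    intro u M
    rw [Complex.normSq_apply]
    nlinarith [sq_nonneg ((star (hbar jk M) ⬝ᵥ hbar u M).im)]
  have hqjk : ∀ M : ℕ, Complex.normSq (star (hbar jk M) ⬝ᵥ hbar jk M)
      = ((star (hbar jk M) ⬝ᵥ hbar jk M).re) ^ 2 := by
    intro M
    rw [hndef jk M, Complex.normSq_ofReal, Complex.ofReal_re]
    ring
  have hqlim : ∀ u, u ≠ jk → Tendsto
      (fun M : ℕ => Complex.normSq (star (hbar jk M) ⬝ᵥ hbar u M) / (M:ℝ) ^ 2)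
      atTop (nhds 0) := by
    intro u hu
    have h := hA3 jk u (Ne.symm hu)
    have h2 := h.pow 2
    rw [show (0:ℝ) ^ 2 = 0 from by ring] at h2
    refine Tendsto.congr (fun M => ?_) h2
    rw [div_pow, Complex.sq_norm]
  have hglim : ∀ u, u ≠ jk → Tendsto
      (fun M : ℕ => (star (hbar jk M) ⬝ᵥ hbar u M).re / (M:ℝ))
      atTop (nhds 0) := by
    intro u hu
    apply squeeze_zero_norm'
      (a := fun M : ℕ => ‖star (hbar jk M) ⬝ᵥ hbar u M‖ / (M:ℝ))
    · filter_upwards [] with M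
      rw [Real.norm_eq_abs, abs_div]
      rw [show |(M:ℝ)| = (M:ℝ) from abs_of_nonneg (Nat.cast_nonneg M)]
      exact div_le_div_of_nonneg_right (Complex.abs_re_le_norm _) (Nat.cast_nonneg M)
    · exact hA3 jk u (Ne.symm hu)
  -- lower linear bound on a
  have hδa : ∃ δ > 0, ∀ᶠ M : ℕ in atTop,
      δ * M ≤ ((D jk M * Λ M * D jk M).trace).re := by
    have htr : ∀ M : ℕ, ((R jk M).trace).re = ∑ m, (R jk M m m).re := by
      intro M
      rw [Matrix.trace]
      exact Complex.re_sum _ _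
    have hf0 : ∀ M : ℕ, 0 ≤ ((R jk M).trace).re / M := by
      intro M
      apply div_nonneg _ (Nat.cast_nonneg M)
      rw [htr M]
      exact Finset.sum_nonneg fun m _ => hr0 jk M m
    have hbdd : Filter.IsBoundedUnder (· ≥ ·) atTop
        (fun M : ℕ => ((R jk M).trace).re / M) :=
      Filter.isBoundedUnder_of ⟨0, fun M => hf0 M⟩
    set ℓ := Filter.liminf (fun M : ℕ => ((R jk M).trace).re / M) Filter.atTop with hℓ
    have hℓpos : 0 < ℓ := hA1b jk
    have hev : ∀ᶠ M : ℕ in atTop, ℓ / 2 < ((R jk M).trace).re / M :=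
      Filter.eventually_lt_of_lt_liminf (by linarith) hbdd
    refine ⟨(ℓ/2)^2 / B, by positivity, ?_⟩
    filter_upwards [hev, eventually_ge_atTop 1] with M h1 hM1
    have hMpos : (0:ℝ) < M := by exact_mod_cast hM1
    rw [lt_div_iff₀ hMpos] at h1
    rw [htr M] at h1
    have hcheb : (∑ m, (R jk M m m).re) ^ 2
        ≤ (M:ℝ) * ∑ m, ((R jk M m m).re) ^ 2 := by
      have := sq_sum_le_card_mul_sum_sq
        (s := (Finset.univ : Finset (Fin M))) (f := fun m => (R jk M m m).re)
      rwa [Finset.card_univ, Fintype.card_fin] at this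
    have hS2 : B⁻¹ * (∑ m, ((R jk M m m).re) ^ 2)
        ≤ ((D jk M * Λ M * D jk M).trace).re := by
      rw [hbre jk M, Finset.mul_sum]
      refine Finset.sum_le_sum fun m _ => ?_
      have h2 : B⁻¹ ≤ (ψR M m)⁻¹ := inv_anti₀ (hψpos M m) (hψub M m)
      calc B⁻¹ * ((R jk M m m).re) ^ 2
          ≤ (ψR M m)⁻¹ * ((R jk M m m).re) ^ 2 :=
            mul_le_mul_of_nonneg_right h2 (sq_nonneg _)
        _ = (R jk M m m).re * (ψR M m)⁻¹ * (R jk M m m).re := by ring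
    have hS1 : ℓ / 2 * M ≤ ∑ m, (R jk M m m).re := h1.le
    have hS1nn : 0 ≤ ℓ / 2 * M := by positivity
    rw [div_mul_eq_mul_div, div_le_iff₀ hBpos]
    have hsq : (ℓ/2 * M)^2 ≤ (∑ m, (R jk M m m).re) ^ 2 := by
      apply sq_le_sq' _ hS1
      nlinarith
    have hfin : (ℓ/2)^2 * M * M ≤ (M:ℝ) * ∑ m, ((R jk M m m).re) ^ 2 := by
      nlinarith
    have hfin2 : (ℓ/2)^2 * M ≤ ∑ m, ((R jk M m m).re) ^ 2 := by
      nlinarith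
    have hfin3 := mul_le_mul_of_nonneg_left hS2 hBpos.le
    rw [← mul_assoc] at hfin3
    rw [mul_inv_cancel₀ (ne_of_gt hBpos), one_mul] at hfin3
    exact le_trans hfin2 (le_trans hfin3 (le_of_eq (mul_comm B _)))
  -- apply the core lemma
  have main := Stmt13Aux.core jk P hjkP p hp τ σ2 hτ hσ2
    (fun M => ((D jk M * Λ M * D jk M).trace).re)
    (fun M => (star (hbar jk M) ⬝ᵥ hbar jk M).re)
    (fun M => ((Sjk M).trace).re)
    (fun u M => ((R u M * Sjk M).trace).re
      + (star (hbar jk M) ⬝ᵥ (R u M *ᵥ hbar jk M)).re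
      + (star (hbar u M) ⬝ᵥ (Sjk M *ᵥ hbar u M)).re)
    (fun u M => Complex.normSq (star (hbar jk M) ⬝ᵥ hbar u M))
    (fun u M => (star (hbar jk M) ⬝ᵥ hbar u M).re)
    (fun u M => ((D u M * Λ M * D jk M).trace).re)
    hstrace (fun _ => rfl) hqg hT0
    (fun u => ⟨_, hKT u⟩) hqjk (fun _ => rfl) (hn0 jk) ⟨_, hKn jk⟩
    hqlim hglim hb0 (fun u => ⟨_, hKb u⟩) hδa ⟨_, hKa⟩
  constructor
  · intro hyp
    refine main.1 ?_
    intro u hu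
    apply squeeze_zero_norm'
      (a := fun M : ℕ => σ2⁻¹ * (((D u M * D jk M).trace).re / (M:ℝ)))
    · filter_upwards [] with M
      rw [Real.norm_eq_abs, abs_of_nonneg (div_nonneg (hb0 u M) (Nat.cast_nonneg M))]
      calc ((D u M * Λ M * D jk M).trace).re / (M:ℝ)
          ≤ (σ2⁻¹ * ((D u M * D jk M).trace).re) / (M:ℝ) :=
            div_le_div_of_nonneg_right (hbe_ub u M) (Nat.cast_nonneg M)
        _ = σ2⁻¹ * (((D u M * D jk M).trace).re / (M:ℝ)) := by ring
    · have := (hyp u hu).const_mul σ2⁻¹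
      simpa using this
  · rintro ⟨c, hc, M₀, hcM⟩
    refine main.2 ⟨c / B, by positivity, M₀, ?_⟩
    intro M hM
    have h1 := hcM M hM
    rcases Nat.eq_zero_or_pos M with rfl | hMp
    · exfalso
      have hz : (∑ u ∈ P.erase jk, ((D u 0 * D jk 0).trace).re / ((0:ℕ):ℝ)) = 0 :=
        Finset.sum_eq_zero fun u _ => by simp
      rw [hz] at h1
      linarith
    · have hMpos : (0:ℝ) < M := by exact_mod_cast hMp
      calc c / B = B⁻¹ * c := by rw [div_eq_inv_mul]
        _ ≤ B⁻¹ * ∑ u ∈ P.erase jk, ((D u M * D jk M).trace).re / (M:ℝ) :=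
            mul_le_mul_of_nonneg_left h1 (inv_nonneg.mpr hBpos.le)
        _ = ∑ u ∈ P.erase jk, (B⁻¹ * ((D u M * D jk M).trace).re) / (M:ℝ) := by
            rw [Finset.mul_sum]
            exact Finset.sum_congr rfl fun u _ => by ring
        _ ≤ ∑ u ∈ P.erase jk, ((D u M * Λ M * D jk M).trace).re / (M:ℝ) :=
            Finset.sum_le_sum fun u _ =>
              (div_le_div_iff_of_pos_right hMpos).mpr (hbe_lb u M)
end

section
/- In the asymptotic uplink setup, define the deterministic UL SINR with the mean-only (MO) estimator: γ^mo(M) = p_{jk}‖h̄_{jk}‖² / [Σ_{all users (l,i)} (p_{li}/‖h̄_{jk}‖²)(h̄_{jk}^H R_{li} h̄_{jk} + |h̄_{jk}^H h̄_{li}|²) − p_{jk}‖h̄_{jk}‖² + σ²]. If in addition liminf_{M→∞} ‖h̄_{jk}(M)‖²/M > 0 (user (j,k) has a line-of-sight path), then γ^mo(M) → +∞ as M → ∞. -/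
open Matrix Filter Topology
open scoped ComplexOrder

private lemma star_dot_self_real {M : ℕ} (v : Fin M → ℂ) :
    star v ⬝ᵥ v = (((star v ⬝ᵥ v).re : ℝ) : ℂ) := by
  have h := dotProduct_star_self_nonneg v
  rw [Complex.nonneg_iff] at h
  exact Complex.ext (by simp) (by simp [← h.2])

private lemma star_dot_self_re_nonneg {M : ℕ} (v : Fin M → ℂ) :
    0 ≤ (star v ⬝ᵥ v).re :=
  (Complex.nonneg_iff.mp (dotProduct_star_self_nonneg v)).1

private lemma psd_re_nonneg {M : ℕ} {A : Matrix (Fin M) (Fin M) ℂ} (hA : A.PosSemidef)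
    (v : Fin M → ℂ) : 0 ≤ (star v ⬝ᵥ (A *ᵥ v)).re :=
  (Complex.nonneg_iff.mp (hA.dotProduct_mulVec_nonneg v)).1

private lemma quad_form_le {M : ℕ} {A : Matrix (Fin M) (Fin M) ℂ} {C : ℝ}
    (h : (((C : ℂ) • (1 : Matrix (Fin M) (Fin M) ℂ)) - A).PosSemidef) (v : Fin M → ℂ) :
    (star v ⬝ᵥ (A *ᵥ v)).re ≤ C * (star v ⬝ᵥ v).re := by
  have h2 := (Complex.nonneg_iff.mp (h.dotProduct_mulVec_nonneg v)).1
  rw [Matrix.sub_mulVec, Matrix.smul_mulVec, Matrix.one_mulVec,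
    dotProduct_sub, dotProduct_smul] at h2
  have him : (star v ⬝ᵥ v).im = 0 := (Complex.nonneg_iff.mp
    (dotProduct_star_self_nonneg v)).2.symm
  simp only [Complex.sub_re, Complex.smul_re, Complex.mul_re, Complex.ofReal_re,
    Complex.ofReal_im, smul_eq_mul, him, mul_zero, zero_mul, sub_zero] at h2
  linarith

/-- **UL asymptotics with the mean-only estimator.** -/
theorem stmt17 (L K : ℕ) (jk : Fin L × Fin K)
    (P : Finset (Fin L × Fin K)) (hjkP : jk ∈ P)
    (p : Fin L × Fin K → ℝ) (hp : ∀ u, 0 < p u)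
    (τ σ2 : ℝ) (hτ : 0 < τ) (hσ2 : 0 < σ2)
    (R : (Fin L × Fin K) → (M : ℕ) → Matrix (Fin M) (Fin M) ℂ)
    (hbar : (Fin L × Fin K) → (M : ℕ) → (Fin M → ℂ))
    (hRpsd : ∀ u M, (R u M).PosSemidef)
    (hA1a : ∀ u, ∃ C : ℝ, ∀ M,
      (((C : ℂ) • (1 : Matrix (Fin M) (Fin M) ℂ)) - R u M).PosSemidef)
    (hA1b : ∀ u, 0 < Filter.liminf (fun M : ℕ => ((R u M).trace).re / M) Filter.atTop)
    (hA2 : ∀ u, ∃ C : ℝ, ∀ M : ℕ, (star (hbar u M) ⬝ᵥ hbar u M).re / M ≤ C)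
    (hA3 : ∀ u v, u ≠ v →
      Tendsto (fun M : ℕ => ‖star (hbar u M) ⬝ᵥ hbar v M‖ / M) atTop (nhds 0))
    -- user `(j,k)` has a line-of-sight path
    (hLoS : 0 < Filter.liminf
      (fun M : ℕ => (star (hbar jk M) ⬝ᵥ hbar jk M).re / M) Filter.atTop) :
    -- the deterministic UL SINR with the mean-only estimator
    let γ : ℕ → ℝ := fun M =>
      p jk * (star (hbar jk M) ⬝ᵥ hbar jk M).re
        / ((∑ u : Fin L × Fin K,
              p u / (star (hbar jk M) ⬝ᵥ hbar jk M).re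
                * ((star (hbar jk M) ⬝ᵥ (R u M *ᵥ hbar jk M)).re
                  + Complex.normSq (star (hbar jk M) ⬝ᵥ hbar u M)))
            - p jk * (star (hbar jk M) ⬝ᵥ hbar jk M).re + σ2)
    Tendsto γ atTop atTop := by
  intro γ
  classical
  -- notation
  set n : ℕ → ℝ := fun M => (star (hbar jk M) ⬝ᵥ hbar jk M).re with hndef
  set q : (Fin L × Fin K) → ℕ → ℝ :=
    fun u M => (star (hbar jk M) ⬝ᵥ (R u M *ᵥ hbar jk M)).re with hqdef
  set s : (Fin L × Fin K) → ℕ → ℝ :=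
    fun u M => Complex.normSq (star (hbar jk M) ⬝ᵥ hbar u M) with hsdef
  have hn0 : ∀ M, 0 ≤ n M := fun M => star_dot_self_re_nonneg _
  -- a positive lower rate c
  obtain ⟨c, hc, hcl⟩ := exists_between hLoS
  have hbdd : Filter.IsBoundedUnder (· ≥ ·) Filter.atTop (fun M : ℕ => n M / M) :=
    Filter.isBoundedUnder_of ⟨0, fun M => div_nonneg (hn0 M) (Nat.cast_nonneg M)⟩
  have hev : ∀ᶠ M in atTop, c < n M / M := eventually_lt_of_lt_liminf hcl hbdd
  have hdom : ∀ᶠ M in atTop, 1 ≤ M ∧ c < n M / M := (eventually_ge_atTop 1).and hev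
  choose Cq hCq using hA1a
  set A : ℝ := ∑ u, p u * Cq u with hAdef
  set ε : (Fin L × Fin K) → ℕ → ℝ :=
    fun u M => ‖star (hbar jk M) ⬝ᵥ hbar u M‖ / M with hεdef
  set E : ℕ → ℝ := fun M => σ2 + (∑ u, p u * q u M / n M)
      + (∑ u ∈ Finset.univ.erase jk, p u * s u M / n M) with hEdef
  set g : ℕ → ℝ := fun M => σ2 / M + A / M
      + (1/c) * ∑ u ∈ Finset.univ.erase jk, p u * (ε u M)^2 with hgdef
  -- pointwise facts on the eventual domain
  have hMpos : ∀ M : ℕ, 1 ≤ M → (0:ℝ) < M := by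
    intro M hM; exact_mod_cast Nat.lt_of_lt_of_le Nat.zero_lt_one hM
  have hnM : ∀ M : ℕ, 1 ≤ M → c < n M / M → c * M ≤ n M := by
    intro M h1 h2
    have := (lt_div_iff₀ (hMpos M h1)).mp h2
    linarith
  have hnpos : ∀ M : ℕ, 1 ≤ M → c < n M / M → 0 < n M := by
    intro M h1 h2
    have := hnM M h1 h2
    nlinarith [hMpos M h1]
  -- the denominator equals E on the domain
  have hDE : ∀ M : ℕ, 1 ≤ M → c < n M / M →
      (∑ u : Fin L × Fin K, p u / n M * (q u M + s u M)) - p jk * n M + σ2 = E M := by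
    intro M h1 h2
    have hnne : n M ≠ 0 := ne_of_gt (hnpos M h1 h2)
    have hsplit : (∑ u : Fin L × Fin K, p u / n M * (q u M + s u M))
        = (∑ u, p u * q u M / n M) + (∑ u, p u * s u M / n M) := by
      rw [← Finset.sum_add_distrib]
      exact Finset.sum_congr rfl fun u _ => by ring
    have hsjk : s jk M = n M ^ 2 := by
      show Complex.normSq (star (hbar jk M) ⬝ᵥ hbar jk M) = _
      rw [star_dot_self_real, Complex.normSq_ofReal]
      rw [hndef]; ring
    have hextract : (∑ u, p u * s u M / n M)
        = (∑ u ∈ Finset.univ.erase jk, p u * s u M / n M) + p jk * n M := by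
      rw [← Finset.sum_erase_add _ _ (Finset.mem_univ jk), hsjk]
      congr 1
      field_simp
    rw [hsplit, hextract, hEdef]
    ring
  -- E is bounded below by σ2
  have hElb : ∀ M : ℕ, 1 ≤ M → c < n M / M → σ2 ≤ E M := by
    intro M h1 h2
    have hn := hnpos M h1 h2
    have t1 : 0 ≤ ∑ u, p u * q u M / n M :=
      Finset.sum_nonneg fun u _ => div_nonneg
        (mul_nonneg (hp u).le (psd_re_nonneg (hRpsd u M) _)) hn.le
    have t2 : 0 ≤ ∑ u ∈ Finset.univ.erase jk, p u * s u M / n M :=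
      Finset.sum_nonneg fun u _ => div_nonneg
        (mul_nonneg (hp u).le (Complex.normSq_nonneg _)) hn.le
    rw [hEdef]; dsimp only; linarith
  -- E / M is bounded above by g
  have hEub : ∀ M : ℕ, 1 ≤ M → c < n M / M → E M / M ≤ g M := by
    intro M h1 h2
    have hMp := hMpos M h1
    have hn := hnpos M h1 h2
    have hcM := hnM M h1 h2
    have tq : (∑ u, p u * q u M / n M) ≤ A := by
      rw [hAdef]
      refine Finset.sum_le_sum fun u _ => ?_
      rw [div_le_iff₀ hn]
      have := quad_form_le (hCq u M) (hbar jk M)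
      have hq0 : 0 ≤ q u M := psd_re_nonneg (hRpsd u M) _
      nlinarith [(hp u).le]
    have ts : (∑ u ∈ Finset.univ.erase jk, p u * s u M / n M) / M
        ≤ (1/c) * ∑ u ∈ Finset.univ.erase jk, p u * (ε u M)^2 := by
      rw [Finset.sum_div, Finset.mul_sum]
      refine Finset.sum_le_sum fun u _ => ?_
      have hs : s u M = (‖star (hbar jk M) ⬝ᵥ hbar u M‖)^2 := by
        show Complex.normSq _ = _
        rw [Complex.normSq_eq_norm_sq]
      have habs : ‖star (hbar jk M) ⬝ᵥ hbar u M‖ = ε u M * M := by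
        rw [hεdef]; field_simp
      rw [hs, habs, div_div]
      have hεnn : 0 ≤ ε u M := div_nonneg (norm_nonneg _) (Nat.cast_nonneg M)
      have h1' : p u * (ε u M * M)^2 = (p u * (ε u M)^2) * M^2 := by ring
      have h2' : (1/c) * (p u * (ε u M)^2) = (p u * (ε u M)^2) * M^2 / (c * M * M) := by
        field_simp
      rw [h1', h2']
      refine div_le_div_of_nonneg_left
        (mul_nonneg (mul_nonneg (hp u).le (sq_nonneg _)) (sq_nonneg _))
        (mul_pos (mul_pos hc hMp) hMp) ?_
      nlinarith
    have hE' : E M / M = σ2 / M + (∑ u, p u * q u M / n M) / M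
        + (∑ u ∈ Finset.univ.erase jk, p u * s u M / n M) / M := by
      rw [hEdef]; ring
    have tq' : (∑ u, p u * q u M / n M) / M ≤ A / M :=
      (div_le_div_iff_of_pos_right hMp).mpr tq
    rw [hE', hgdef]
    dsimp only
    linarith
  -- g tends to 0
  have hg0 : Tendsto g atTop (nhds 0) := by
    have T1 := tendsto_const_div_atTop_nhds_zero_nat σ2
    have T2 := tendsto_const_div_atTop_nhds_zero_nat A
    have T3 : Tendsto (fun M => ∑ u ∈ Finset.univ.erase jk, p u * (ε u M)^2)
        atTop (nhds 0) := by
      have : Tendsto (fun M => ∑ u ∈ Finset.univ.erase jk, p u * (ε u M)^2)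
          atTop (nhds (∑ u ∈ Finset.univ.erase jk, (0:ℝ))) := by
        refine tendsto_finset_sum _ fun u hu => ?_
        have hne : jk ≠ u := (Finset.ne_of_mem_erase hu).symm
        have h3 := ((hA3 jk u hne).pow 2).const_mul (p u)
        have h0 : p u * ((0:ℝ))^2 = 0 := by norm_num
        rw [h0] at h3
        simp only [hεdef]
        exact h3
      rw [Finset.sum_const_zero] at this
      exact this
    have h4 := (T1.add T2).add (T3.const_mul (1/c))
    have h0 : ((0:ℝ) + 0) + 1/c * 0 = 0 := by norm_num
    rw [h0] at h4
    exact h4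
  -- E / M tends to 0 from within (0, ∞)
  have hEM0 : Tendsto (fun M => E M / M) atTop (nhds 0) := by
    refine squeeze_zero' ?_ ?_ hg0
    · filter_upwards [hdom] with M hM
      exact div_nonneg (le_trans hσ2.le (hElb M hM.1 hM.2)) (Nat.cast_nonneg M)
    · filter_upwards [hdom] with M hM
      exact hEub M hM.1 hM.2
  have hEMwithin : Tendsto (fun M => E M / M) atTop (nhdsWithin 0 (Set.Ioi 0)) := by
    rw [tendsto_nhdsWithin_iff]
    refine ⟨hEM0, ?_⟩
    filter_upwards [hdom] with M hM
    exact div_pos (lt_of_lt_of_le hσ2 (hElb M hM.1 hM.2)) (hMpos M hM.1)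
  have hInv : Tendsto (fun M => (E M / M)⁻¹) atTop atTop :=
    hEMwithin.inv_tendsto_nhdsGT_zero
  have hfinal : Tendsto (fun M => (p jk * c) * (E M / M)⁻¹) atTop atTop :=
    hInv.const_mul_atTop (mul_pos (hp jk) hc)
  refine tendsto_atTop_mono' atTop ?_ hfinal
  filter_upwards [hdom] with M hM
  obtain ⟨h1, h2⟩ := hM
  have hn := hnpos M h1 h2
  have hE := lt_of_lt_of_le hσ2 (hElb M h1 h2)
  have hMp := hMpos M h1
  have hγ : γ M = p jk * n M / E M := by
    show p jk * n M / _ = _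
    rw [hDE M h1 h2]
  rw [hγ, inv_div, mul_div_assoc, ← mul_div_assoc (p jk * c), ← mul_div_assoc]
  refine (div_le_div_iff_of_pos_right hE).mpr ?_
  have := hnM M h1 h2
  nlinarith [(hp jk).le]
end
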